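/- arXiv:2102.00588 — 5 statements merged into one kernel-verified Lean document; each statement's English description precedes it below -/
import Mathlib

section
/- For α > 2, the infinite sum ∑_{j=2}^∞ Γ(1+α/2)·Γ(j) / Γ(j+α/2) converges and equals 2/(α-2). -/
open Real Filter Topology

private lemma gamma_ratio_le (s : ℝ) (hs : 1 < s) (n : ℕ) :
    Real.Gamma ((n : ℝ) + 2) / Real.Gamma ((n : ℝ) + 1 + s)
      ≤ ((n : ℝ) + 1) ^ (-((s - 1) / s)) := by
  have hs0 : (0:ℝ) < s := by linarith
  have hn1 : (0:ℝ) < (n : ℝ) + 1 := by positivity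
  have hn2 : (0:ℝ) < (n : ℝ) + 2 := by positivity
  have hns : (0:ℝ) < (n : ℝ) + 1 + s := by positivity
  set a : ℝ := (s - 1) / s with ha
  set b : ℝ := 1 / s with hb
  have ha0 : 0 < a := by apply div_pos <;> linarith
  have hb0 : 0 < b := by apply div_pos <;> linarith
  have hab : a + b = 1 := by rw [ha, hb]; field_simp; ring
  have key := Real.Gamma_mul_add_mul_le_rpow_Gamma_mul_rpow_Gamma
    hn1 hns ha0 hb0 hab
  have hcomb : a * ((n : ℝ) + 1) + b * ((n : ℝ) + 1 + s) = (n : ℝ) + 2 := by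
    rw [ha, hb]; field_simp; ring
  rw [hcomb] at key
  have hG1 : 0 < Real.Gamma ((n : ℝ) + 1) := Real.Gamma_pos_of_pos hn1
  have hGs : 0 < Real.Gamma ((n : ℝ) + 1 + s) := Real.Gamma_pos_of_pos hns
  have hmono : Real.Gamma ((n : ℝ) + 2) ≤ Real.Gamma ((n : ℝ) + 1 + s) := by
    apply Real.Gamma_strictMonoOn_Ici.monotoneOn
    · simp [Set.mem_Ici]
    · simp only [Set.mem_Ici]; linarith
    · linarith
  have hGs_rw : Real.Gamma ((n : ℝ) + 1 + s)
      = Real.Gamma ((n : ℝ) + 1 + s) ^ a * Real.Gamma ((n : ℝ) + 1 + s) ^ b := by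
    rw [← Real.rpow_add hGs, hab, Real.rpow_one]
  have step1 : Real.Gamma ((n : ℝ) + 2) / Real.Gamma ((n : ℝ) + 1 + s)
      ≤ (Real.Gamma ((n : ℝ) + 1) / Real.Gamma ((n : ℝ) + 1 + s)) ^ a := by
    rw [Real.div_rpow hG1.le hGs.le, div_le_div_iff₀ hGs (by positivity)]
    calc Real.Gamma ((n : ℝ) + 2) * Real.Gamma ((n : ℝ) + 1 + s) ^ a
        ≤ (Real.Gamma ((n : ℝ) + 1) ^ a * Real.Gamma ((n : ℝ) + 1 + s) ^ b)
            * Real.Gamma ((n : ℝ) + 1 + s) ^ a := by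
          gcongr
      _ = Real.Gamma ((n : ℝ) + 1) ^ a
            * (Real.Gamma ((n : ℝ) + 1 + s) ^ a * Real.Gamma ((n : ℝ) + 1 + s) ^ b) := by ring
      _ = Real.Gamma ((n : ℝ) + 1) ^ a * Real.Gamma ((n : ℝ) + 1 + s) := by rw [← hGs_rw]
  have step2 : Real.Gamma ((n : ℝ) + 1) / Real.Gamma ((n : ℝ) + 1 + s)
      ≤ ((n : ℝ) + 1)⁻¹ := by
    have hG2eq : Real.Gamma ((n : ℝ) + 2) = ((n : ℝ) + 1) * Real.Gamma ((n : ℝ) + 1) := by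
      have := Real.Gamma_add_one (s := (n : ℝ) + 1) (by positivity)
      rw [show (n : ℝ) + 2 = ((n : ℝ) + 1) + 1 by ring, this]
    rw [div_le_iff₀ hGs, inv_mul_eq_div, le_div_iff₀ hn1]
    calc Real.Gamma ((n : ℝ) + 1) * ((n : ℝ) + 1)
        = Real.Gamma ((n : ℝ) + 2) := by rw [hG2eq]; ring
      _ ≤ Real.Gamma ((n : ℝ) + 1 + s) := hmono
  calc Real.Gamma ((n : ℝ) + 2) / Real.Gamma ((n : ℝ) + 1 + s)
      ≤ (Real.Gamma ((n : ℝ) + 1) / Real.Gamma ((n : ℝ) + 1 + s)) ^ a := step1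
    _ ≤ (((n : ℝ) + 1)⁻¹) ^ a := by
        apply Real.rpow_le_rpow (by positivity) step2 ha0.le
    _ = ((n : ℝ) + 1) ^ (-a) := by
        rw [Real.inv_rpow hn1.le, ← Real.rpow_neg hn1.le]

/-- For `α > 2`, the sum `∑_{j=2}^∞ Γ(1+α/2)·Γ(j)/Γ(j+α/2)` converges and
equals `2/(α-2)` (the MISR in a Poisson downlink cellular network). -/
theorem misr_ppp_sum (α : ℝ) (hα : 2 < α) :
    HasSum
      (fun n : ℕ =>
        Real.Gamma (1 + α / 2) * Real.Gamma ((n : ℝ) + 2) /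
          Real.Gamma (((n : ℝ) + 2) + α / 2))
      (2 / (α - 2)) := by
  set s : ℝ := α / 2 with hsdef
  have hs : 1 < s := by simp only [hsdef]; linarith
  have hs0 : (0:ℝ) < s := by linarith
  have hGpos : ∀ x : ℝ, 0 < x → 0 < Real.Gamma x := fun x hx => Real.Gamma_pos_of_pos hx
  set c : ℕ → ℝ := fun n => Real.Gamma ((n : ℝ) + 2) / Real.Gamma ((n : ℝ) + 1 + s) with hc
  set K : ℝ := Real.Gamma (1 + s) / (s - 1) with hK
  have hterm : ∀ n : ℕ,
      Real.Gamma (1 + s) * Real.Gamma ((n : ℝ) + 2) / Real.Gamma (((n : ℝ) + 2) + s)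
        = K * (c n - c (n + 1)) := by
    intro n
    have h1 : (0:ℝ) < (n : ℝ) + 1 + s := by positivity
    have h2 : (0:ℝ) < (n : ℝ) + 2 + s := by positivity
    have hG1 := (hGpos _ h1).ne'
    have hG2 := (hGpos _ h2).ne'
    have hrec : Real.Gamma ((n : ℝ) + 2 + s) = ((n:ℝ) + 1 + s) * Real.Gamma ((n : ℝ) + 1 + s) := by
      have := Real.Gamma_add_one (s := (n : ℝ) + 1 + s) h1.ne'
      rw [show (n : ℝ) + 2 + s = ((n : ℝ) + 1 + s) + 1 by ring, this]
    have hrec2 : Real.Gamma ((n : ℝ) + 3) = ((n:ℝ) + 2) * Real.Gamma ((n : ℝ) + 2) := by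
      have := Real.Gamma_add_one (s := (n : ℝ) + 2) (by positivity)
      rw [show (n : ℝ) + 3 = ((n : ℝ) + 2) + 1 by ring, this]
    have hcast : ((n + 1 : ℕ) : ℝ) = (n : ℝ) + 1 := by push_cast; ring
    simp only [hc, hK, hcast]
    rw [show (n : ℝ) + 1 + 2 = (n : ℝ) + 3 by ring,
        show (n : ℝ) + 1 + 1 + s = (n : ℝ) + 2 + s by ring, hrec, hrec2]
    have hs1 : s - 1 ≠ 0 := by intro h; linarith
    field_simp
    ring
  have hpartial : ∀ N : ℕ,
      ∑ n ∈ Finset.range N,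
        Real.Gamma (1 + s) * Real.Gamma ((n : ℝ) + 2) / Real.Gamma (((n : ℝ) + 2) + s)
        = K * (c 0 - c N) := by
    intro N
    calc ∑ n ∈ Finset.range N,
          Real.Gamma (1 + s) * Real.Gamma ((n : ℝ) + 2) / Real.Gamma (((n : ℝ) + 2) + s)
        = ∑ n ∈ Finset.range N, K * (c n - c (n + 1)) :=
          Finset.sum_congr rfl fun n _ => hterm n
      _ = K * ∑ n ∈ Finset.range N, (c n - c (n + 1)) := by rw [Finset.mul_sum]
      _ = K * (c 0 - c N) := by rw [Finset.sum_range_sub' c]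
  have hclim : Tendsto c atTop (𝓝 0) := by
    have h0 : Tendsto (fun n : ℕ => (n : ℝ) + 1) atTop atTop :=
      tendsto_atTop_add_const_right _ 1 tendsto_natCast_atTop_atTop
    have hub : Tendsto (fun n : ℕ => ((n : ℝ) + 1) ^ (-((s - 1) / s))) atTop (𝓝 0) :=
      (tendsto_rpow_neg_atTop (div_pos (by linarith) hs0)).comp h0
    refine squeeze_zero (fun n => ?_) (fun n => gamma_ratio_le s hs n) hub
    have h1 : (0:ℝ) < (n : ℝ) + 1 + s := by positivity
    have h2 : (0:ℝ) < (n : ℝ) + 2 := by positivity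
    exact div_nonneg (hGpos _ h2).le (hGpos _ h1).le
  have hval : K * c 0 = 2 / (α - 2) := by
    have hG1s : Real.Gamma (1 + s) ≠ 0 := (hGpos _ (by linarith)).ne'
    have hc0 : c 0 = 1 / Real.Gamma (1 + s) := by
      simp only [hc, Nat.cast_zero]
      rw [show (0:ℝ) + 2 = 2 by ring, show (0:ℝ) + 1 + s = 1 + s by ring, Real.Gamma_two]
    rw [hK, hc0]
    have hs1 : s - 1 ≠ 0 := by intro h; linarith
    have hα2 : α - 2 ≠ 0 := by intro h; linarith
    field_simp
    rw [hsdef]; ring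
  have hnonneg : ∀ n : ℕ,
      0 ≤ Real.Gamma (1 + s) * Real.Gamma ((n : ℝ) + 2) / Real.Gamma (((n : ℝ) + 2) + s) := by
    intro n
    have h2 : (0:ℝ) < (n : ℝ) + 2 + s := by positivity
    exact div_nonneg (mul_nonneg (hGpos _ (by linarith)).le (hGpos _ (by positivity)).le)
      (hGpos _ h2).le
  rw [show (2 / (α - 2) : ℝ) = K * c 0 from hval.symm]
  rw [hasSum_iff_tendsto_nat_of_nonneg hnonneg]
  have hlim : Tendsto (fun N => K * (c 0 - c N)) atTop (𝓝 (K * (c 0 - 0))) :=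
    (tendsto_const_nhds.sub hclim).const_mul K
  simp only [sub_zero] at hlim
  exact hlim.congr fun N => (hpartial N).symm
end

section
/- Let J_K^QSI = exp(-a·D_K(δ)) and J_K^FVI = exp(-a·K) where a > 0, 0 < δ < 1, and D_K(δ) = Γ(K+δ)/(Γ(K)Γ(1+δ)). Then J_K^QSI > J_K^FVI for every integer K ≥ 2. -/
open Real

/-- The diversity factor `D_K(δ) = Γ(K+δ)/(Γ(K)·Γ(1+δ))`. -/
noncomputable def diversityFactor (δ : ℝ) (K : ℕ) : ℝ :=
  Real.Gamma ((K : ℝ) + δ) / (Real.Gamma K * Real.Gamma (1 + δ))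

lemma diversityFactor_lt (δ : ℝ) (hδ0 : 0 < δ) (hδ1 : δ < 1) :
    ∀ K : ℕ, 2 ≤ K → diversityFactor δ K < K := by
  intro K hK
  induction K, hK using Nat.le_induction with
  | base =>
    have h2 : ((2 : ℕ) : ℝ) + δ = (1 + δ) + 1 := by push_cast; ring
    have hΓpos : 0 < Real.Gamma (1 + δ) := Real.Gamma_pos_of_pos (by linarith)
    rw [diversityFactor, h2, Real.Gamma_add_one (by linarith)]
    have : Real.Gamma ((2 : ℕ) : ℝ) = 1 := by
      norm_num [Real.Gamma_two]
    rw [this]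
    rw [one_mul, mul_div_assoc, div_self (ne_of_gt hΓpos)]
    push_cast; linarith
  | succ K hK ih =>
    have hKpos : (0 : ℝ) < K := by positivity
    have hΓK : 0 < Real.Gamma (K : ℝ) := Real.Gamma_pos_of_pos hKpos
    have hΓδ : 0 < Real.Gamma (1 + δ) := Real.Gamma_pos_of_pos (by linarith)
    have hΓKδ : 0 < Real.Gamma ((K : ℝ) + δ) := Real.Gamma_pos_of_pos (by linarith)
    have h1 : ((K + 1 : ℕ) : ℝ) + δ = ((K : ℝ) + δ) + 1 := by push_cast; ring
    have h2 : ((K + 1 : ℕ) : ℝ) = (K : ℝ) + 1 := by push_cast; ring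
    rw [diversityFactor, h1, h2, Real.Gamma_add_one (by linarith),
      Real.Gamma_add_one (ne_of_gt hKpos)]
    have key : (((K : ℝ) + δ) * Real.Gamma ((K : ℝ) + δ)) /
        (((K : ℝ)) * Real.Gamma (K : ℝ) * Real.Gamma (1 + δ))
        = (((K : ℝ) + δ) / K) * diversityFactor δ K := by
      rw [diversityFactor]; field_simp
    rw [key]
    have hD : diversityFactor δ K < K := ih
    have hDpos : 0 < diversityFactor δ K := by
      rw [diversityFactor]; positivity
    have hfrac : (1 : ℝ) < ((K : ℝ) + δ) / K := by
      rw [lt_div_iff₀ hKpos]; linarith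
    calc ((K : ℝ) + δ) / K * diversityFactor δ K
        < ((K : ℝ) + δ) / K * K := by
          exact mul_lt_mul_of_pos_left hD (by linarith)
      _ = (K : ℝ) + δ := by field_simp
      _ < (K : ℝ) + 1 := by linarith

/-- For `a > 0`, `0 < δ < 1` and `K ≥ 2`, the joint success probability under
quasi-static interference `exp(-a·D_K(δ))` strictly exceeds that under
fast-varying interference `exp(-a·K)`. -/
theorem jsp_qsi_gt_fvi (a δ : ℝ) (ha : 0 < a) (hδ0 : 0 < δ) (hδ1 : δ < 1)
    (K : ℕ) (hK : 2 ≤ K) :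
    Real.exp (-(a * diversityFactor δ K)) > Real.exp (-(a * K)) := by
  have h := diversityFactor_lt δ hδ0 hδ1 K hK
  apply Real.exp_lt_exp.mpr
  nlinarith
end

section
/- For fixed 0 < δ < 1 and fixed r > 0, the function a ↦ (exp(a(1-δ)) - 1)/(exp(a) - 1) is strictly decreasing on (0, ∞). -/
open Real

private lemma aux_M_neg {s a : ℝ} (hs0 : 0 < s) (hs1 : s < 1) (ha : 0 < a) :
    (s - 1) * Real.exp (a * s) - s * Real.exp (a * (s - 1)) + 1 < 0 := by
  have key : StrictAntiOn
      (fun x : ℝ => (s - 1) * Real.exp (x * s) - s * Real.exp (x * (s - 1)) + 1)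
      (Set.Ici 0) := by
    apply strictAntiOn_of_deriv_neg (convex_Ici 0)
    · fun_prop
    · intro x hx
      rw [interior_Ici] at hx
      have h1 : HasDerivAt (fun y : ℝ => y * s) s x := by simpa using (hasDerivAt_id x).mul_const s
      have h2 : HasDerivAt (fun y : ℝ => y * (s - 1)) (s - 1) x :=
        by simpa using (hasDerivAt_id x).mul_const (s - 1)
      have hd : HasDerivAt
          (fun x : ℝ => (s - 1) * Real.exp (x * s) - s * Real.exp (x * (s - 1)) + 1)
          ((s - 1) * (Real.exp (x * s) * s) - s * (Real.exp (x * (s - 1)) * (s - 1))) x := by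
        exact (((h1.exp.const_mul (s - 1)).sub (h2.exp.const_mul s)).add_const 1)
      rw [hd.deriv]
      have hlt : Real.exp (x * (s - 1)) < Real.exp (x * s) := by
        apply Real.exp_lt_exp.2
        nlinarith [Set.mem_Ioi.1 hx]
      nlinarith [mul_neg_of_neg_of_pos (show s - 1 < 0 by linarith)
        (mul_pos hs0 (sub_pos.2 hlt))]
  have h0 : (fun x : ℝ => (s - 1) * Real.exp (x * s) - s * Real.exp (x * (s - 1)) + 1) 0 = 0 := by
    simp
  calc (s - 1) * Real.exp (a * s) - s * Real.exp (a * (s - 1)) + 1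
      < (s - 1) * Real.exp (0 * s) - s * Real.exp (0 * (s - 1)) + 1 :=
        key (Set.mem_Ici.2 le_rfl) (Set.mem_Ici.2 ha.le) ha
    _ = 0 := by simp

/-- For fixed `0 < δ < 1` (and fixed link distance `r > 0`), the temporal correlation
coefficient `a ↦ (exp(a(1-δ)) - 1)/(exp(a) - 1)` is strictly decreasing on `(0, ∞)`. -/
theorem correlation_coefficient_strictAnti (δ r : ℝ) (hδ0 : 0 < δ) (hδ1 : δ < 1)
    (hr : 0 < r) :
    StrictAntiOn (fun a : ℝ => (Real.exp (a * (1 - δ)) - 1) / (Real.exp a - 1))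
      (Set.Ioi 0) := by
  set s : ℝ := 1 - δ with hs
  have hs0 : 0 < s := by linarith
  have hs1 : s < 1 := by linarith
  have hden : ∀ x ∈ Set.Ioi (0:ℝ), Real.exp x - 1 ≠ 0 := by
    intro x hx
    have : (1:ℝ) < Real.exp x := by
      calc (1:ℝ) = Real.exp 0 := by simp
        _ < Real.exp x := Real.exp_lt_exp.2 (Set.mem_Ioi.1 hx)
    linarith
  apply strictAntiOn_of_deriv_neg (convex_Ioi 0)
  · exact ContinuousOn.div (by fun_prop) (by fun_prop) hden
  · intro x hx
    rw [interior_Ioi] at hx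
    have hxpos : 0 < x := Set.mem_Ioi.1 hx
    have hv : Real.exp x - 1 ≠ 0 := hden x hx
    have hu : HasDerivAt (fun y : ℝ => Real.exp (y * s) - 1) (Real.exp (x * s) * s) x := by
      have h1 : HasDerivAt (fun y : ℝ => y * s) s x := by simpa using (hasDerivAt_id x).mul_const s
      simpa using h1.exp.sub_const 1
    have hvd : HasDerivAt (fun y : ℝ => Real.exp y - 1) (Real.exp x) x := by
      simpa using (Real.hasDerivAt_exp x).sub_const 1
    have hd : HasDerivAt (fun a : ℝ => (Real.exp (a * s) - 1) / (Real.exp a - 1)) _ x :=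
      hu.div hvd hv
    rw [hd.deriv]
    apply div_neg_of_neg_of_pos
    · have hM := aux_M_neg hs0 hs1 hxpos
      have hmul : Real.exp (x * (s - 1)) * Real.exp x = Real.exp (x * s) := by
        rw [← Real.exp_add]; ring_nf
      have hprod : Real.exp x *
          ((s - 1) * Real.exp (x * s) - s * Real.exp (x * (s - 1)) + 1) < 0 :=
        mul_neg_of_pos_of_neg (Real.exp_pos x) hM
      nlinarith [Real.exp_pos x, Real.exp_pos (x * s)]
    · have : (1:ℝ) < Real.exp x := by
        calc (1:ℝ) = Real.exp 0 := by simp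
          _ < Real.exp x := Real.exp_lt_exp.2 hxpos
      positivity
end

section
/- For 0 ≤ r ≤ 2R, the area of the intersection of two disks of radius R whose centers are at distance r apart equals 2R²·arccos(r/(2R)) - r·√(R² - r²/4). -/
open Real MeasureTheory

lemma ftc_sqrt (R a : ℝ) (hR : 0 < R) (ha0 : 0 ≤ a) (haR : a ≤ R) :
    ∫ u in a..R, Real.sqrt (R ^ 2 - u ^ 2)
      = R ^ 2 * (π / 2) / 2 - (a * Real.sqrt (R ^ 2 - a ^ 2) + R ^ 2 * Real.arcsin (a / R)) / 2 := by
  set F : ℝ → ℝ := fun u => (u * Real.sqrt (R ^ 2 - u ^ 2) + R ^ 2 * Real.arcsin (u / R)) / 2 with hF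
  have hcont : ContinuousOn F (Set.Icc a R) := by
    apply Continuous.continuousOn
    exact ((continuous_id.mul ((continuous_const.sub (continuous_pow 2)).sqrt)).add
      (continuous_const.mul (Real.continuous_arcsin.comp (continuous_id.div_const R)))).div_const 2
  have hderiv : ∀ x ∈ Set.Ioo a R, HasDerivWithinAt F (Real.sqrt (R ^ 2 - x ^ 2)) (Set.Ioi x) x := by
    intro x hx
    have hxR : x < R := hx.2
    have hx0 : 0 ≤ x := le_trans ha0 hx.1.le
    have hc : 0 < R ^ 2 - x ^ 2 := by nlinarith
    set c := R ^ 2 - x ^ 2 with hcdef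
    have hsc : 0 < Real.sqrt c := Real.sqrt_pos.mpr hc
    have hss : Real.sqrt c * Real.sqrt c = c := Real.mul_self_sqrt hc.le
    have h1 : HasDerivAt (fun u : ℝ => R ^ 2 - u ^ 2) (-(2 * x)) x := by
      simpa using ((hasDerivAt_pow 2 x).const_sub (R ^ 2))
    have h2 : HasDerivAt (fun u : ℝ => Real.sqrt (R ^ 2 - u ^ 2))
        (1 / (2 * Real.sqrt c) * (-(2 * x))) x :=
      (Real.hasDerivAt_sqrt hc.ne').comp x h1
    have h3 : HasDerivAt (fun u : ℝ => u * Real.sqrt (R ^ 2 - u ^ 2))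
        (1 * Real.sqrt c + x * (1 / (2 * Real.sqrt c) * (-(2 * x)))) x :=
      (hasDerivAt_id x).mul h2
    have hne1 : x / R ≠ -1 := by
      have : 0 ≤ x / R := div_nonneg hx0 hR.le
      intro h; rw [h] at this; linarith
    have hne2 : x / R ≠ 1 := by
      intro h
      have : x = R := by field_simp at h; linarith
      linarith
    have h4 : HasDerivAt (fun u : ℝ => Real.arcsin (u / R))
        (1 / Real.sqrt (1 - (x / R) ^ 2) * (1 / R)) x :=
      (Real.hasDerivAt_arcsin hne1 hne2).comp (h₂ := Real.arcsin) x ((hasDerivAt_id' x).div_const R)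
    have h5 : Real.sqrt (1 - (x / R) ^ 2) = Real.sqrt c / R := by
      rw [show (1 : ℝ) - (x / R) ^ 2 = c / R ^ 2 by rw [hcdef]; field_simp,
        Real.sqrt_div hc.le, Real.sqrt_sq hR.le]
    have h6 : HasDerivAt F
        ((1 * Real.sqrt c + x * (1 / (2 * Real.sqrt c) * (-(2 * x)))
          + R ^ 2 * (1 / Real.sqrt (1 - (x / R) ^ 2) * (1 / R))) / 2) x := by
      exact (h3.add ((h4.const_mul (R ^ 2)))).div_const 2
    have heq : (1 * Real.sqrt c + x * (1 / (2 * Real.sqrt c) * (-(2 * x)))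
          + R ^ 2 * (1 / Real.sqrt (1 - (x / R) ^ 2) * (1 / R))) / 2 = Real.sqrt c := by
      rw [h5]
      have hss' : Real.sqrt c * Real.sqrt c = R ^ 2 - x ^ 2 := hss
      field_simp
      linear_combination (-1 : ℝ) * hss'
    rw [heq] at h6
    exact h6.hasDerivWithinAt
  have hint : IntervalIntegrable (fun u => Real.sqrt (R ^ 2 - u ^ 2)) volume a R := by
    apply Continuous.intervalIntegrable; fun_prop
  rw [intervalIntegral.integral_eq_sub_of_hasDeriv_right_of_le haR hcont hderiv hint]
  have : F R = R ^ 2 * (π / 2) / 2 := by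
    simp [hF, div_self hR.ne', Real.arcsin_one, Real.sqrt_eq_zero', sub_self]
  rw [this, hF]

lemma vol_sq_le (c : ℝ) : volume {y : ℝ | y ^ 2 ≤ c} = ENNReal.ofReal (2 * Real.sqrt c) := by
  rcases le_or_gt 0 c with h | h
  · have hs : {y : ℝ | y ^ 2 ≤ c} = Set.Icc (-Real.sqrt c) (Real.sqrt c) := by
      ext y
      simp only [Set.mem_setOf_eq, Set.mem_Icc, ← abs_le]
      constructor
      · intro hy
        have := Real.sqrt_le_sqrt hy
        rwa [Real.sqrt_sq_eq_abs] at this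
      · intro hy
        calc y ^ 2 = |y| ^ 2 := (sq_abs y).symm
          _ ≤ Real.sqrt c ^ 2 := pow_le_pow_left₀ (abs_nonneg y) hy 2
          _ = c := Real.sq_sqrt h
    rw [hs, Real.volume_Icc]
    congr 1; ring
  · have hs : {y : ℝ | y ^ 2 ≤ c} = ∅ := by
      ext y; simp only [Set.mem_setOf_eq, Set.mem_empty_iff_false, iff_false, not_le]
      nlinarith [sq_nonneg y]
    rw [hs, measure_empty, Real.sqrt_eq_zero'.mpr h.le, mul_zero, ENNReal.ofReal_zero]

lemma lens_area (R r : ℝ) (hR : 0 < R) (hr0 : 0 ≤ r) (hr2 : r ≤ 2 * R) :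
    volume {p : ℝ × ℝ | (p.1 + r / 2) ^ 2 + p.2 ^ 2 ≤ R ^ 2
        ∧ (p.1 - r / 2) ^ 2 + p.2 ^ 2 ≤ R ^ 2}
      = ENNReal.ofReal
          (2 * R ^ 2 * Real.arccos (r / (2 * R)) - r * Real.sqrt (R ^ 2 - r ^ 2 / 4)) := by
  set S : Set (ℝ × ℝ) := {p : ℝ × ℝ | (p.1 + r / 2) ^ 2 + p.2 ^ 2 ≤ R ^ 2
        ∧ (p.1 - r / 2) ^ 2 + p.2 ^ 2 ≤ R ^ 2} with hSdef
  have hSm : MeasurableSet S := by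
    rw [hSdef, Set.setOf_and]
    exact ((isClosed_le (by fun_prop) continuous_const).inter
      (isClosed_le (by fun_prop) continuous_const)).measurableSet
  set g : ℝ → ℝ := fun x => 2 * Real.sqrt (R ^ 2 - (|x| + r / 2) ^ 2) with hgdef
  have hsect : ∀ x : ℝ, volume (Prod.mk x ⁻¹' S) = ENNReal.ofReal (g x) := by
    intro x
    have : Prod.mk x ⁻¹' S = {y : ℝ | y ^ 2 ≤ R ^ 2 - (|x| + r / 2) ^ 2} := by
      ext y
      simp only [Set.mem_preimage, hSdef, Set.mem_setOf_eq]
      rcases abs_cases x with ⟨h1, h2⟩ | ⟨h1, h2⟩ <;>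
        constructor <;> intro h
      · rw [h1]; nlinarith [h.1]
      · constructor <;> nlinarith
      · rw [h1]; nlinarith [h.2]
      · constructor <;> nlinarith
    rw [this, vol_sq_le]
  have hg_cont : Continuous g := by
    apply continuous_const.mul
    exact ((continuous_const.sub ((continuous_abs.add continuous_const).pow 2)).sqrt)
  have hg_supp : HasCompactSupport g := by
    apply HasCompactSupport.intro (isCompact_Icc (a := -R) (b := R))
    intro x hx
    rw [Set.mem_Icc, ← abs_le] at hx
    have hxR : R < |x| := lt_of_not_ge hx
    have : R ^ 2 - (|x| + r / 2) ^ 2 ≤ 0 := by nlinarith [abs_nonneg x]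
    simp [hgdef, Real.sqrt_eq_zero'.mpr this]
  have hg_int : Integrable g := hg_cont.integrable_of_hasCompactSupport hg_supp
  have hg_nn : 0 ≤ g := fun x => by positivity
  have hM : (0:ℝ) ≤ R - r / 2 := by linarith
  -- compute the integral of g
  have hint : ∫ x, g x = 2 * R ^ 2 * Real.arccos (r / (2 * R))
      - r * Real.sqrt (R ^ 2 - r ^ 2 / 4) := by
    set f : ℝ → ℝ := fun u => 2 * Real.sqrt (R ^ 2 - (u + r / 2) ^ 2) with hfdef
    have h1 : ∫ x, g x = 2 * ∫ x in Set.Ioi (0:ℝ), f x := integral_comp_abs (f := f)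
    have h2 : ∫ x in Set.Ioi (0:ℝ), f x = ∫ x in Set.Ioc (0:ℝ) (R - r / 2), f x := by
      calc ∫ x in Set.Ioi (0:ℝ), f x
          = ∫ x in Set.Ioi (0:ℝ), (Set.Ioc (0:ℝ) (R - r / 2)).indicator f x := by
            apply setIntegral_congr_fun measurableSet_Ioi
            intro x hx
            rw [Set.indicator_apply]
            by_cases hxM : x ≤ R - r / 2
            · rw [if_pos ⟨hx, hxM⟩]
            · rw [if_neg (fun hh => hxM hh.2)]
              have : R ^ 2 - (x + r / 2) ^ 2 ≤ 0 := by
                push_neg at hxM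
                nlinarith
              simp [hfdef, Real.sqrt_eq_zero'.mpr this]
        _ = ∫ x in Set.Ioi (0:ℝ) ∩ Set.Ioc (0:ℝ) (R - r / 2), f x :=
            setIntegral_indicator measurableSet_Ioc
        _ = ∫ x in Set.Ioc (0:ℝ) (R - r / 2), f x := by
            rw [Set.inter_eq_right.mpr Set.Ioc_subset_Ioi_self]
    have h3 : ∫ x in Set.Ioc (0:ℝ) (R - r / 2), f x = ∫ x in (0:ℝ)..(R - r / 2), f x :=
      (intervalIntegral.integral_of_le hM).symm
    have h4 : ∫ x in (0:ℝ)..(R - r / 2), f x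
        = ∫ u in (r/2)..R, 2 * Real.sqrt (R ^ 2 - u ^ 2) := by
      rw [hfdef]
      have := intervalIntegral.integral_comp_add_right (a := (0:ℝ)) (b := R - r / 2)
        (fun u => 2 * Real.sqrt (R ^ 2 - u ^ 2)) (r / 2)
      simpa using this
    have h5 : ∫ u in (r/2)..R, 2 * Real.sqrt (R ^ 2 - u ^ 2)
        = 2 * ∫ u in (r/2)..R, Real.sqrt (R ^ 2 - u ^ 2) :=
      intervalIntegral.integral_const_mul 2 _
    have h6 := ftc_sqrt R (r / 2) hR (by linarith) (by linarith)
    rw [h1, h2, h3, h4, h5, h6]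
    rw [Real.arccos_eq_pi_div_two_sub_arcsin,
      show R ^ 2 - (r / 2) ^ 2 = R ^ 2 - r ^ 2 / 4 by ring,
      show r / 2 / R = r / (2 * R) by rw [div_div]]
    ring
  calc volume S = ∫⁻ x, volume (Prod.mk x ⁻¹' S) := by
        rw [show (volume : Measure (ℝ × ℝ)) = (volume : Measure ℝ).prod volume from
          MeasureTheory.Measure.volume_eq_prod ℝ ℝ, Measure.prod_apply hSm]
    _ = ∫⁻ x, ENNReal.ofReal (g x) := by simp_rw [hsect]
    _ = ENNReal.ofReal (∫ x, g x) :=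
        (ofReal_integral_eq_lintegral_ofReal hg_int (Filter.Eventually.of_forall hg_nn)).symm
    _ = _ := by rw [hint]

/-- The area of the intersection of two disks of radius `R` in the plane whose
centers are at distance `r`, for `0 ≤ r ≤ 2R`, equals
`2R²·arccos(r/(2R)) - r·√(R² - r²/4)`. -/
theorem area_inter_disks (R r : ℝ) (hR : 0 < R) (hr0 : 0 ≤ r) (hr2 : r ≤ 2 * R)
    (c₁ c₂ : EuclideanSpace ℝ (Fin 2)) (hd : dist c₁ c₂ = r) :
    volume (Metric.closedBall c₁ R ∩ Metric.closedBall c₂ R)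
      = ENNReal.ofReal
          (2 * R ^ 2 * Real.arccos (r / (2 * R)) - r * Real.sqrt (R ^ 2 - r ^ 2 / 4)) := by
  classical
  set e₀ : EuclideanSpace ℝ (Fin 2) := EuclideanSpace.single 0 1 with he₀
  have hne : ‖e₀‖ = 1 := by rw [he₀, EuclideanSpace.norm_single]; norm_num
  set v : EuclideanSpace ℝ (Fin 2) := c₂ - c₁ with hv
  set w : EuclideanSpace ℝ (Fin 2) := r • e₀ with hw
  have hnv : ‖v‖ = ‖w‖ := by
    rw [hv, hw, norm_smul, hne, ← dist_eq_norm, dist_comm, hd]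
    simp [Real.norm_eq_abs, abs_of_nonneg hr0]
  set g := Submodule.reflection (ℝ ∙ (v - w))ᗮ with hg
  have hgv : g v = w := Submodule.reflection_sub hnv
  set p₁ : EuclideanSpace ℝ (Fin 2) := (-(r / 2)) • e₀ with hp₁
  set p₂ : EuclideanSpace ℝ (Fin 2) := (r / 2) • e₀ with hp₂
  set T : EuclideanSpace ℝ (Fin 2) → EuclideanSpace ℝ (Fin 2) :=
    fun x => g (x - c₁) + p₁ with hT
  have hT1 : T c₁ = p₁ := by simp [hT]
  have hT2 : T c₂ = p₂ := by
    have : T c₂ = g v + p₁ := by simp [hT, hv]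
    rw [this, hgv, hw, hp₁, hp₂, ← add_smul]
    congr 1
    ring
  have hTiso : Isometry T := by
    apply Isometry.of_dist_eq
    intro x y
    rw [hT]
    simp only
    rw [dist_add_right, g.dist_map, dist_sub_right]
  have hTmp : MeasurePreserving T := by
    have h1 : MeasurePreserving (fun x : EuclideanSpace ℝ (Fin 2) => x - c₁) volume volume :=
      measurePreserving_sub_right volume c₁
    have h2 : MeasurePreserving (⇑g) volume volume := g.measurePreserving
    have h3 : MeasurePreserving (fun y : EuclideanSpace ℝ (Fin 2) => y + p₁) volume volume :=
      measurePreserving_add_right volume p₁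
    exact (h3.comp h2).comp h1
  have hpre : Metric.closedBall c₁ R ∩ Metric.closedBall c₂ R
      = T ⁻¹' (Metric.closedBall p₁ R ∩ Metric.closedBall p₂ R) := by
    ext x
    simp only [Set.mem_inter_iff, Set.mem_preimage, Metric.mem_closedBall]
    rw [← hT1, ← hT2, hTiso.dist_eq, hTiso.dist_eq]
  set S : Set (ℝ × ℝ) := {p : ℝ × ℝ | (p.1 + r / 2) ^ 2 + p.2 ^ 2 ≤ R ^ 2
        ∧ (p.1 - r / 2) ^ 2 + p.2 ^ 2 ≤ R ^ 2} with hSdef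
  have hSm : MeasurableSet S := by
    rw [hSdef, Set.setOf_and]
    exact ((isClosed_le (by fun_prop) continuous_const).inter
      (isClosed_le (by fun_prop) continuous_const)).measurableSet
  have hmp2 : MeasurePreserving
      (fun x : EuclideanSpace ℝ (Fin 2) =>
        MeasurableEquiv.finTwoArrow ((MeasurableEquiv.toLp 2 (Fin 2 → ℝ)).symm x))
      volume volume :=
    (volume_preserving_finTwoArrow ℝ).comp (EuclideanSpace.volume_preserving_symm_measurableEquiv_toLp (Fin 2))
  have hp₁c : p₁ 0 = -(r / 2) ∧ p₁ 1 = 0 := by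
    constructor <;> simp [hp₁, he₀, EuclideanSpace.single_apply]
  have hp₂c : p₂ 0 = r / 2 ∧ p₂ 1 = 0 := by
    constructor <;> simp [hp₂, he₀, EuclideanSpace.single_apply]
  have hball : ∀ (p : EuclideanSpace ℝ (Fin 2)) (x : EuclideanSpace ℝ (Fin 2)),
      dist x p ≤ R ↔ (x 0 - p 0) ^ 2 + (x 1 - p 1) ^ 2 ≤ R ^ 2 := by
    intro p x
    rw [EuclideanSpace.dist_eq, Fin.sum_univ_two, Real.dist_eq, Real.dist_eq, sq_abs, sq_abs,
      Real.sqrt_le_iff]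
    constructor
    · exact fun h => h.2
    · exact fun h => ⟨hR.le, h⟩
  have hset : Metric.closedBall p₁ R ∩ Metric.closedBall p₂ R
      = (fun x : EuclideanSpace ℝ (Fin 2) =>
          MeasurableEquiv.finTwoArrow ((MeasurableEquiv.toLp 2 (Fin 2 → ℝ)).symm x)) ⁻¹' S := by
    ext x
    simp only [Set.mem_inter_iff, Set.mem_preimage, Metric.mem_closedBall, hSdef,
      Set.mem_setOf_eq]
    rw [hball p₁ x, hball p₂ x, hp₁c.1, hp₁c.2, hp₂c.1, hp₂c.2]
    have hx0 : (MeasurableEquiv.finTwoArrow ((MeasurableEquiv.toLp 2 (Fin 2 → ℝ)).symm x)).1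
        = x 0 := rfl
    have hx1 : (MeasurableEquiv.finTwoArrow ((MeasurableEquiv.toLp 2 (Fin 2 → ℝ)).symm x)).2
        = x 1 := rfl
    rw [hx0, hx1]
    ring_nf
  rw [hpre, hTmp.measure_preimage
      ((measurableSet_closedBall.inter measurableSet_closedBall).nullMeasurableSet),
    hset, hmp2.measure_preimage hSm.nullMeasurableSet]
  exact lens_area R r hR hr0 hr2
end

section
/- For α > 2 and ρ ∈ (0,1), the MISR of the typical cell-center user equals 2ρ^α/(α-2), computed as [(2ρ^{2+α}/(2+α))/ρ²]·[(α+2)/(α-2)], and consequently the asymptotic SIR gain of the cell-center user over the typical user is ρ^{-α} > 1. -/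
open Real

/-- For `α > 2` and `ρ ∈ (0,1)`, the MISR of the typical cell-center user equals
`2ρ^α/(α-2)`, computed as `[(2ρ^{2+α}/(2+α))/ρ²]·[(α+2)/(α-2)]`, and consequently
the asymptotic SIR gain of the cell-center user over the typical user is
`(2/(α-2))/(2ρ^α/(α-2)) = ρ^{-α} > 1`. -/
theorem cell_center_misr_and_gain (α ρ : ℝ) (hα : 2 < α) (hρ0 : 0 < ρ) (hρ1 : ρ < 1) :
    2 * ρ ^ (2 + α) / (2 + α) / ρ ^ 2 * ((α + 2) / (α - 2)) = 2 * ρ ^ α / (α - 2) ∧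
    (2 / (α - 2)) / (2 * ρ ^ α / (α - 2)) = ρ ^ (-α) ∧
    1 < ρ ^ (-α) := by
  have hρa : (0:ℝ) < ρ ^ α := rpow_pos_of_pos hρ0 α
  have h2a : (0:ℝ) < 2 + α := by linarith
  have ha2 : (0:ℝ) < α - 2 := by linarith
  have hsplit : ρ ^ (2 + α) = ρ ^ 2 * ρ ^ α := by
    rw [rpow_add hρ0, rpow_two]
  refine ⟨?_, ?_, ?_⟩
  · rw [hsplit]
    field_simp
    ring
  · rw [rpow_neg hρ0.le]
    field_simp
  · rw [rpow_neg hρ0.le, lt_inv_comm₀ one_pos hρa]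
    simpa using rpow_lt_one hρ0.le hρ1 (by linarith)
end
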